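/- arXiv:2406.16054 — 2 statements merged into one kernel-verified Lean document; each statement's English description precedes it below -/
import Mathlib

section
/- Soundness of the deterministic-assertion probabilistic Hoare logic PHL_d: for all deterministic assertions φ, ψ and every command C, if the triple {φ}C{ψ} is derivable in the proof system PHL_d, then {φ}C{ψ} is valid, i.e., for every interpretation I and every deterministic state S with S ⊨^I φ, the probabilistic state ⟦C⟧(μ_S) satisfies ψ (every support of ⟦C⟧(μ_S) satisfies ψ under I). -/
open scoped ENNReal

/-! ## Deterministic and probabilistic states -/

abbrev DState (V : Type) := V → ℤ

abbrev PState (V : Type) := DState V → ℝ≥0∞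

open Classical in
noncomputable def pointDist {V : Type} (S : DState V) : PState V :=
  fun S' => if S' = S then 1 else 0

def IsSubDist {V : Type} (μ : PState V) : Prop := (∑' S : DState V, μ S) ≤ 1

/-! ## Arithmetic and Boolean expressions over program variables -/

inductive AExp (V : Type) where
  | const : ℤ → AExp V
  | pvar : V → AExp V
  | add : AExp V → AExp V → AExp V
  | sub : AExp V → AExp V → AExp V
  | mul : AExp V → AExp V → AExp V

def AExp.eval {V : Type} (S : DState V) : AExp V → ℤ
  | const n => n
  | pvar X => S X
  | add e1 e2 => e1.eval S + e2.eval S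
  | sub e1 e2 => e1.eval S - e2.eval S
  | mul e1 e2 => e1.eval S * e2.eval S

inductive BExp (V : Type) where
  | tt : BExp V
  | ff : BExp V
  | le : AExp V → AExp V → BExp V
  | lt : AExp V → AExp V → BExp V
  | eq : AExp V → AExp V → BExp V
  | not : BExp V → BExp V
  | and : BExp V → BExp V → BExp V

def BExp.holds {V : Type} (S : DState V) : BExp V → Prop
  | tt => True
  | ff => False
  | le e1 e2 => e1.eval S ≤ e2.eval S
  | lt e1 e2 => e1.eval S < e2.eval S
  | eq e1 e2 => e1.eval S = e2.eval S
  | not b => ¬ b.holds S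
  | and b1 b2 => b1.holds S ∧ b2.holds S

open Classical in
/-- restriction `↓_B μ` of a probabilistic state to the states satisfying `B`. -/
noncomputable def dRestrict {V : Type} (B : BExp V) (μ : PState V) : PState V :=
  fun S => if B.holds S then μ S else 0

/-! ## Commands -/

inductive Cmd (V : Type) where
  | skip : Cmd V
  | assign : V → AExp V → Cmd V
  /-- probabilistic assignment `X ←$ {a₁:k₁,…,aₙ:kₙ}`: a list of pairs of
  nonnegative-real weights and integer values, with the weights summing to 1. -/
  | passign : V → {l : List (NNReal × ℤ) // (l.map Prod.fst).sum = 1} → Cmd V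
  | seq : Cmd V → Cmd V → Cmd V
  | ifte : BExp V → Cmd V → Cmd V → Cmd V
  | whileDo : BExp V → Cmd V → Cmd V

open Classical in
/-- semantics of the assignment of a state-dependent integer to variable `X`. -/
noncomputable def detAssign {V : Type} (X : V) (f : DState V → ℤ) (μ : PState V) : PState V :=
  fun S' => ∑' S : DState V, μ S * pointDist (Function.update S X (f S)) S'

open Classical in
noncomputable def Cmd.sem {V : Type} : Cmd V → PState V → PState V
  | .skip, μ => μ
  | .assign X E, μ => detAssign X (fun S => E.eval S) μ
  | .passign X Rl, μ =>
      fun S' => (Rl.1.map (fun p => (p.1 : ℝ≥0∞) * detAssign X (fun _ => p.2) μ S')).sum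
  | .seq C1 C2, μ => C2.sem (C1.sem μ)
  | .ifte B C1 C2, μ =>
      fun S' => C1.sem (dRestrict B μ) S' + C2.sem (dRestrict (BExp.not B) μ) S'
  | .whileDo B C, μ =>
      fun S' => ∑' i : ℕ, dRestrict (BExp.not B) ((fun ν => C.sem (dRestrict B ν))^[i] μ) S'
termination_by C _ => sizeOf C

/-- `C.pow k` is the `k`-fold sequential composition of `C` (with `C⁰ = skip`). -/
def Cmd.pow {V : Type} (C : Cmd V) : ℕ → Cmd V
  | 0 => .skip
  | k + 1 => .seq C (C.pow k)

/-! ## Deterministic assertions -/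

inductive AExpL (V L : Type) where
  | const : ℤ → AExpL V L
  | pvar : V → AExpL V L
  | lvar : L → AExpL V L
  | add : AExpL V L → AExpL V L → AExpL V L
  | sub : AExpL V L → AExpL V L → AExpL V L
  | mul : AExpL V L → AExpL V L → AExpL V L

def AExpL.eval {V L : Type} (I : L → ℤ) (S : DState V) : AExpL V L → ℤ
  | const n => n
  | pvar X => S X
  | lvar x => I x
  | add e1 e2 => e1.eval I S + e2.eval I S
  | sub e1 e2 => e1.eval I S - e2.eval I S
  | mul e1 e2 => e1.eval I S * e2.eval I S

def AExp.toL {V L : Type} : AExp V → AExpL V L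
  | .const n => .const n
  | .pvar X => .pvar X
  | .add e1 e2 => .add e1.toL e2.toL
  | .sub e1 e2 => .sub e1.toL e2.toL
  | .mul e1 e2 => .mul e1.toL e2.toL

/-- Deterministic assertions: first-order formulas over program and logical
variables (including, for the weakest preconditions of loops, countable
conjunctions `conj`). -/
inductive Assertion (V L : Type) where
  | tt : Assertion V L
  | ff : Assertion V L
  | le : AExpL V L → AExpL V L → Assertion V L
  | lt : AExpL V L → AExpL V L → Assertion V L
  | eq : AExpL V L → AExpL V L → Assertion V L
  | not : Assertion V L → Assertion V L
  | and : Assertion V L → Assertion V L → Assertion V L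
  | all : L → Assertion V L → Assertion V L
  | conj : (ℕ → Assertion V L) → Assertion V L

def Assertion.or {V L : Type} (φ ψ : Assertion V L) : Assertion V L :=
  (φ.not.and ψ.not).not

open Classical in
/-- satisfaction `S ⊨^I φ` of a deterministic assertion on a deterministic state. -/
def Assertion.sat {V L : Type} : Assertion V L → (L → ℤ) → DState V → Prop
  | tt, _, _ => True
  | ff, _, _ => False
  | le e1 e2, I, S => e1.eval I S ≤ e2.eval I S
  | lt e1 e2, I, S => e1.eval I S < e2.eval I S
  | eq e1 e2, I, S => e1.eval I S = e2.eval I S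
  | not φ, I, S => ¬ φ.sat I S
  | and φ ψ, I, S => φ.sat I S ∧ ψ.sat I S
  | all x φ, I, S => ∀ n : ℤ, φ.sat (Function.update I x n) S
  | conj f, I, S => ∀ k : ℕ, (f k).sat I S

open Classical in
noncomputable def AExpL.substP {V L : Type} (X : V) (E : AExp V) : AExpL V L → AExpL V L
  | const n => const n
  | pvar Y => if Y = X then E.toL else pvar Y
  | lvar x => lvar x
  | add e1 e2 => add (e1.substP X E) (e2.substP X E)
  | sub e1 e2 => sub (e1.substP X E) (e2.substP X E)
  | mul e1 e2 => mul (e1.substP X E) (e2.substP X E)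

/-- substitution `φ[X/E]` of the arithmetic expression `E` for the program
variable `X`. -/
noncomputable def Assertion.substP {V L : Type} (X : V) (E : AExp V) :
    Assertion V L → Assertion V L
  | tt => tt
  | ff => ff
  | le e1 e2 => le (e1.substP X E) (e2.substP X E)
  | lt e1 e2 => lt (e1.substP X E) (e2.substP X E)
  | eq e1 e2 => eq (e1.substP X E) (e2.substP X E)
  | not φ => not (φ.substP X E)
  | and φ ψ => and (φ.substP X E) (ψ.substP X E)
  | all x φ => all x (φ.substP X E)
  | conj f => conj (fun k => (f k).substP X E)

/-- the precondition `φ[X/k₁] ∧ … ∧ φ[X/kₙ]` of a probabilistic assignment. -/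
noncomputable def pasPre {V L : Type} (φ : Assertion V L) (X : V)
    (l : List (NNReal × ℤ)) : Assertion V L :=
  l.foldr (fun p acc => Assertion.and (φ.substP X (AExp.const p.2)) acc) Assertion.tt

def BExp.toAssertion {V L : Type} : BExp V → Assertion V L
  | tt => .tt
  | ff => .ff
  | le e1 e2 => .le e1.toL e2.toL
  | lt e1 e2 => .lt e1.toL e2.toL
  | eq e1 e2 => .eq e1.toL e2.toL
  | not b => .not b.toAssertion
  | and b1 b2 => .and b1.toAssertion b2.toAssertion

/-- `μ ⊨^I φ`: every support of the probabilistic state `μ` satisfies `φ`. -/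
def PSat {V L : Type} (μ : PState V) (I : L → ℤ) (φ : Assertion V L) : Prop :=
  ∀ S : DState V, μ S ≠ 0 → φ.sat I S

/-- validity `⊨ {φ} C {ψ}` of a Hoare triple with deterministic assertions. -/
def ValidD {V L : Type} (φ : Assertion V L) (C : Cmd V) (ψ : Assertion V L) : Prop :=
  ∀ (I : L → ℤ) (S : DState V), φ.sat I S → PSat (C.sem (pointDist S)) I ψ

/-! ## The proof system PHL_d -/

inductive Derivable {V L : Type} : Assertion V L → Cmd V → Assertion V L → Prop where
  | skip (φ : Assertion V L) : Derivable φ .skip φ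
  | assign (φ : Assertion V L) (X : V) (E : AExp V) :
      Derivable (φ.substP X E) (.assign X E) φ
  | passign (φ : Assertion V L) (X : V)
      (Rl : {l : List (NNReal × ℤ) // (l.map Prod.fst).sum = 1}) :
      Derivable (pasPre φ X Rl.1) (.passign X Rl) φ
  | seq {φ φ1 φ2 : Assertion V L} {C1 C2 : Cmd V} :
      Derivable φ C1 φ1 → Derivable φ1 C2 φ2 → Derivable φ (.seq C1 C2) φ2
  | ifte {φ ψ : Assertion V L} {B : BExp V} {C1 C2 : Cmd V} :
      Derivable (φ.and B.toAssertion) C1 ψ →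
      Derivable (φ.and B.toAssertion.not) C2 ψ →
      Derivable φ (.ifte B C1 C2) ψ
  | cons {φ' φ ψ ψ' : Assertion V L} {C : Cmd V} :
      (∀ (I : L → ℤ) (S : DState V), φ'.sat I S → φ.sat I S) →
      Derivable φ C ψ →
      (∀ (I : L → ℤ) (S : DState V), ψ.sat I S → ψ'.sat I S) →
      Derivable φ' C ψ'
  | and {φ1 φ2 ψ1 ψ2 : Assertion V L} {C : Cmd V} :
      Derivable φ1 C ψ1 → Derivable φ2 C ψ2 →
      Derivable (φ1.and φ2) C (ψ1.and ψ2)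
  | or {φ1 φ2 ψ1 ψ2 : Assertion V L} {C : Cmd V} :
      Derivable φ1 C ψ1 → Derivable φ2 C ψ2 →
      Derivable (φ1.or φ2) C (ψ1.or ψ2)
  | whileDo {φ : Assertion V L} {B : BExp V} {C : Cmd V} :
      Derivable (φ.and B.toAssertion) C φ →
      Derivable φ (.whileDo B C) (φ.and B.toAssertion.not)

/-! ## Weakest preconditions for deterministic assertions -/

noncomputable def wp {V L : Type} : Cmd V → Assertion V L → Assertion V L
  | .skip, φ => φ
  | .assign X E, φ => φ.substP X E
  | .passign X Rl, φ => pasPre φ X Rl.1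
  | .seq C1 C2, φ => wp C1 (wp C2 φ)
  | .ifte B C1 C2, φ =>
      (B.toAssertion.and (wp C1 φ)).or (B.toAssertion.not.and (wp C2 φ))
  | .whileDo B C, φ => .conj (fun k =>
      Nat.rec (motive := fun _ => Assertion V L) Assertion.tt
        (fun _ ψk => (B.toAssertion.and (wp C ψk)).or (B.toAssertion.not.and φ)) k)
termination_by C _ => sizeOf C

/-! ## Real expressions and weakest preterms -/

/-- Real expressions (terms): real constants, real variables, probabilities of
deterministic assertions, arithmetic combinations, and (semantically
interpreted) countable sums. -/
inductive RExp (V L R : Type) where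
  | const : ℝ → RExp V L R
  | rvar : R → RExp V L R
  | prob : Assertion V L → RExp V L R
  | add : RExp V L R → RExp V L R → RExp V L R
  | sub : RExp V L R → RExp V L R → RExp V L R
  | mul : RExp V L R → RExp V L R → RExp V L R
  | infsum : (ℕ → RExp V L R) → RExp V L R

noncomputable def RExp.eval {V L R : Type} (IL : L → ℤ) (IR : R → ℝ) (μ : PState V) :
    RExp V L R → ℝ
  | const a => a
  | rvar x => IR x
  | prob φ => (∑' S : {S : DState V // φ.sat IL S}, μ S.1).toReal
  | add r1 r2 => r1.eval IL IR μ + r2.eval IL IR μ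
  | sub r1 r2 => r1.eval IL IR μ - r2.eval IL IR μ
  | mul r1 r2 => r1.eval IL IR μ * r2.eval IL IR μ
  | infsum f => ∑' k : ℕ, (f k).eval IL IR μ

/-- the conditional term `r/B`. -/
def RExp.cond {V L R : Type} (B : Assertion V L) : RExp V L R → RExp V L R
  | const a => const a
  | rvar x => rvar x
  | prob φ => prob (φ.and B)
  | add r1 r2 => add (r1.cond B) (r2.cond B)
  | sub r1 r2 => sub (r1.cond B) (r2.cond B)
  | mul r1 r2 => mul (r1.cond B) (r2.cond B)
  | infsum f => infsum (fun k => (f k).cond B)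

open Classical in
/-- restriction `↓_B μ` of a probabilistic state to the states satisfying the
deterministic assertion `B` (under the interpretation `I`). -/
noncomputable def aRestrict {V L : Type} (I : L → ℤ) (B : Assertion V L) (μ : PState V) :
    PState V :=
  fun S => if B.sat I S then μ S else 0

/-- homomorphic extension of an action on probability atoms to all real
expressions. -/
def homExt {V L R : Type} (h : Assertion V L → RExp V L R) : RExp V L R → RExp V L R
  | .const a => .const a
  | .rvar x => .rvar x
  | .prob φ => h φ
  | .add r1 r2 => .add (homExt h r1) (homExt h r2)
  | .sub r1 r2 => .sub (homExt h r1) (homExt h r2)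
  | .mul r1 r2 => .mul (homExt h r1) (homExt h r2)
  | .infsum f => .infsum (fun k => homExt h (f k))

/-- the finite conjunction `f 0 ∧ … ∧ f (n-1)`. -/
def finConj {V L : Type} : ℕ → (ℕ → Assertion V L) → Assertion V L
  | 0, _ => .tt
  | k + 1, f => (finConj k f).and (f k)

/-- the assertion `wp(i) = ¬wp(C⁰,¬B) ∧ … ∧ ¬wp(C^{i-1},¬B) ∧ wp(Cⁱ,¬B)`. -/
noncomputable def wpN {V L : Type} (B : BExp V) (C : Cmd V) (i : ℕ) : Assertion V L :=
  (finConj i (fun j => (wp (C.pow j) B.toAssertion.not).not)).and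
    (wp (C.pow i) B.toAssertion.not)

/-- the assertion `wp(∞) = ⋀_{i≥0} ¬wp(Cⁱ,¬B)`. -/
noncomputable def wpInf {V L : Type} (B : BExp V) (C : Cmd V) : Assertion V L :=
  .conj (fun i => (wp (C.pow i) B.toAssertion.not).not)

open Classical in
/-- the weakest preterm of a probability atom `P(φ)` for the probabilistic
assignment `X ←$ l`: the sum over nonempty subsets `T` of the indices of
`(Σ_{i∈T} aᵢ) · P(⋀_{i∈T} φ[X/kᵢ] ∧ ⋀_{j∉T} ¬φ[X/kⱼ])`. -/
noncomputable def ptPAS {V L R : Type} (X : V) (l : List (NNReal × ℤ))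
    (φ : Assertion V L) : RExp V L R :=
  (((Finset.univ : Finset (Finset (Fin l.length))).filter Finset.Nonempty).toList).foldr
    (fun T acc => RExp.add
      (RExp.mul (RExp.const (∑ i ∈ T, ((l.get i).1 : ℝ)))
        (RExp.prob (finConj l.length (fun j =>
          if h : j < l.length then
            (if (⟨j, h⟩ : Fin l.length) ∈ T then
              φ.substP X (AExp.const (l.get ⟨j, h⟩).2)
            else
              (φ.substP X (AExp.const (l.get ⟨j, h⟩).2)).not)
          else Assertion.tt))))
      acc)
    (RExp.const 0)

open Classical in
/-- the weakest preterm of a probability atom `P(φ)` with respect to a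
command. -/
noncomputable def ptProb {V L R : Type} : Cmd V → Assertion V L → RExp V L R
  | .skip, φ => .prob φ
  | .assign X E, φ => .prob (φ.substP X E)
  | .passign X Rl, φ => ptPAS X Rl.1 φ
  | .seq C1 C2, φ => homExt (fun ψ => ptProb C1 ψ) (ptProb C2 φ)
  | .ifte B C1 C2, φ =>
      .add ((ptProb C1 φ).cond B.toAssertion) ((ptProb C2 φ).cond B.toAssertion.not)
  | .whileDo B C, φ =>
      -- `g` is the preterm transformer of `IF = if B then C else skip`
      let g : RExp V L R → RExp V L R := fun r =>
        .add ((homExt (fun ψ => ptProb C ψ) r).cond B.toAssertion)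
          (r.cond B.toAssertion.not)
      -- `SUM = Σ_{i=0}^∞ P(wp(i)) · (pt(IFⁱ, P(φ)) / wp(i))`
      let SUM : RExp V L R := .infsum (fun i =>
        .mul (.prob (wpN B C i)) ((g^[i] (.prob φ)).cond (wpN B C i)))
      -- `f r = pt(C, r) / wp(∞)`
      let f : RExp V L R → RExp V L R := fun r =>
        (homExt (fun ψ => ptProb C ψ) r).cond (wpInf B C)
      -- `Σ_{i=0}^∞ Tᵢ` with `Tᵢ = fⁱ(SUM) · ∏_{j<i} fʲ(P(wp(∞)))`
      .infsum (fun i =>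
        .mul (f^[i] SUM)
          ((List.range i).foldr
            (fun j acc => .mul (f^[j] (.prob (wpInf B C))) acc) (.const 1)))
termination_by C _ => sizeOf C

/-- the weakest preterm `pt(C, r)`. -/
noncomputable def pt {V L R : Type} (C : Cmd V) : RExp V L R → RExp V L R :=
  homExt (fun φ => ptProb C φ)

/-! ## Probabilistic formulas -/

inductive PFormula (V L R : Type) where
  | le : RExp V L R → RExp V L R → PFormula V L R
  | lt : RExp V L R → RExp V L R → PFormula V L R
  | eq : RExp V L R → RExp V L R → PFormula V L R
  | not : PFormula V L R → PFormula V L R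
  | and : PFormula V L R → PFormula V L R → PFormula V L R

noncomputable def PFormula.sat {V L R : Type} (IL : L → ℤ) (IR : R → ℝ) (μ : PState V) :
    PFormula V L R → Prop
  | le r1 r2 => r1.eval IL IR μ ≤ r2.eval IL IR μ
  | lt r1 r2 => r1.eval IL IR μ < r2.eval IL IR μ
  | eq r1 r2 => r1.eval IL IR μ = r2.eval IL IR μ
  | not Φ => ¬ Φ.sat IL IR μ
  | and Φ Ψ => Φ.sat IL IR μ ∧ Ψ.sat IL IR μ

/-- the weakest precondition of a probabilistic assertion. -/
noncomputable def WP {V L R : Type} (C : Cmd V) : PFormula V L R → PFormula V L R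
  | .le r1 r2 => .le (pt C r1) (pt C r2)
  | .lt r1 r2 => .lt (pt C r1) (pt C r2)
  | .eq r1 r2 => .eq (pt C r1) (pt C r2)
  | .not Φ => .not (WP C Φ)
  | .and Φ Ψ => .and (WP C Φ) (WP C Ψ)

/-- validity `⊨ {Φ} C {Ψ}` of a Hoare triple with probabilistic assertions. -/
def ValidP {V L R : Type} (Φ : PFormula V L R) (C : Cmd V) (Ψ : PFormula V L R) : Prop :=
  ∀ (IL : L → ℤ) (IR : R → ℝ) (μ : PState V), IsSubDist μ →
    Φ.sat IL IR μ → Ψ.sat IL IR (C.sem μ)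

/-! ## The proof system of PHL with probabilistic assertions -/

inductive PDerivable {V L R : Type} : PFormula V L R → Cmd V → PFormula V L R → Prop where
  | skip (Φ : PFormula V L R) : PDerivable Φ .skip Φ
  | assign (Φ : PFormula V L R) (X : V) (E : AExp V) :
      PDerivable (WP (.assign X E) Φ) (.assign X E) Φ
  | passign (Φ : PFormula V L R) (X : V)
      (Rl : {l : List (NNReal × ℤ) // (l.map Prod.fst).sum = 1}) :
      PDerivable (WP (.passign X Rl) Φ) (.passign X Rl) Φ
  | ifte (Φ : PFormula V L R) (B : BExp V) (C1 C2 : Cmd V) :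
      PDerivable (WP (.ifte B C1 C2) Φ) (.ifte B C1 C2) Φ
  | whileDo (Φ : PFormula V L R) (B : BExp V) (C : Cmd V) :
      PDerivable (WP (.whileDo B C) Φ) (.whileDo B C) Φ
  | seq {Φ Φ1 Φ2 : PFormula V L R} {C1 C2 : Cmd V} :
      PDerivable Φ C1 Φ1 → PDerivable Φ1 C2 Φ2 → PDerivable Φ (.seq C1 C2) Φ2
  | cons {Φ' Φ Ψ Ψ' : PFormula V L R} {C : Cmd V} :
      (∀ (IL : L → ℤ) (IR : R → ℝ) (μ : PState V), IsSubDist μ →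
        Φ'.sat IL IR μ → Φ.sat IL IR μ) →
      PDerivable Φ C Ψ →
      (∀ (IL : L → ℤ) (IR : R → ℝ) (μ : PState V), IsSubDist μ →
        Ψ.sat IL IR μ → Ψ'.sat IL IR μ) →
      PDerivable Φ' C Ψ'

section Soundness

variable {V L : Type}

open Classical

/-! ### Semantics equation lemmas -/

lemma sem_skip (μ : PState V) : (Cmd.skip : Cmd V).sem μ = μ := by simp [Cmd.sem]

lemma sem_assign (μ : PState V) (X : V) (E : AExp V) :
    (Cmd.assign X E).sem μ = detAssign X (fun S => E.eval S) μ := by simp [Cmd.sem]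

lemma sem_passign (μ : PState V) (X : V)
    (Rl : {l : List (NNReal × ℤ) // (l.map Prod.fst).sum = 1}) :
    (Cmd.passign X Rl).sem μ =
      fun S' => (Rl.1.map (fun p => (p.1 : ℝ≥0∞) * detAssign X (fun _ => p.2) μ S')).sum := by
  simp [Cmd.sem]

lemma sem_seq (μ : PState V) (C1 C2 : Cmd V) :
    (Cmd.seq C1 C2).sem μ = C2.sem (C1.sem μ) := by simp [Cmd.sem]

lemma sem_ifte (μ : PState V) (B : BExp V) (C1 C2 : Cmd V) :
    (Cmd.ifte B C1 C2).sem μ =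
      fun S' => C1.sem (dRestrict B μ) S' + C2.sem (dRestrict (BExp.not B) μ) S' := by
  simp [Cmd.sem]

lemma sem_while (μ : PState V) (B : BExp V) (C : Cmd V) :
    (Cmd.whileDo B C).sem μ =
      fun S' => ∑' i : ℕ,
        dRestrict (BExp.not B) ((fun ν => C.sem (dRestrict B ν))^[i] μ) S' := by
  simp [Cmd.sem]

lemma ne_zero_of_le' {a b : ℝ≥0∞} (hb : b ≠ 0) (h : b ≤ a) : a ≠ 0 :=
  fun ha => hb (le_antisymm (ha ▸ h) zero_le)

/-! ### Linearity infrastructure -/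

def LinF {V : Type} (F : PState V → PState V) : Prop :=
  (∀ μ ν : PState V, (∀ S, μ S ≤ ν S) → ∀ S, F μ S ≤ F ν S) ∧
  (∀ (c : ℝ≥0∞) (μ : PState V) (S : DState V), F (fun T => c * μ T) S = c * F μ S)

lemma LinF.point_le {F : PState V → PState V} (hF : LinF F) (μ : PState V)
    (S S' : DState V) : μ S * F (pointDist S) S' ≤ F μ S' := by
  rw [← hF.2]
  refine hF.1 _ _ (fun T => ?_) S'
  by_cases h : T = S <;> simp [pointDist, h]

lemma LinF.comp {F G : PState V → PState V} (hF : LinF F) (hG : LinF G) :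
    LinF (fun μ => G (F μ)) := by
  refine ⟨fun μ ν h S => hG.1 _ _ (hF.1 _ _ h) S, fun c μ S => ?_⟩
  show G (F fun T => c * μ T) S = _
  rw [show F (fun T => c * μ T) = fun T => c * F μ T from funext (hF.2 c μ), hG.2]

lemma LinF.iterate {F : PState V → PState V} (hF : LinF F) (i : ℕ) : LinF F^[i] := by
  induction i with
  | zero => exact ⟨fun μ ν h S => h S, fun c μ S => rfl⟩
  | succ i ih =>
    refine ⟨fun μ ν h S => ?_, fun c μ S => ?_⟩
    · rw [Function.iterate_succ_apply, Function.iterate_succ_apply]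
      exact ih.1 _ _ (hF.1 _ _ h) S
    · rw [Function.iterate_succ_apply, Function.iterate_succ_apply,
        show F (fun T => c * μ T) = fun T => c * F μ T from funext (hF.2 c μ), ih.2]

lemma lin_detAssign (X : V) (f : DState V → ℤ) : LinF (detAssign X f) := by
  constructor
  · intro μ ν h S'
    exact ENNReal.tsum_le_tsum fun S => mul_le_mul_left (h S) _
  · intro c μ S'
    simp only [detAssign, mul_assoc]
    exact ENNReal.tsum_mul_left

lemma lin_dRestrict (B : BExp V) : LinF (dRestrict B) := by
  constructor
  · intro μ ν h S
    by_cases hB : B.holds S <;> simp [dRestrict, hB, h S]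
  · intro c μ S
    by_cases hB : B.holds S <;> simp [dRestrict, hB]

lemma lin_sem (C : Cmd V) : LinF (Cmd.sem C) := by
  induction C with
  | skip =>
    exact ⟨fun μ ν h S => by simpa [sem_skip] using h S, fun c μ S => by simp [sem_skip]⟩
  | assign X E =>
    constructor
    · intro μ ν h S
      rw [sem_assign, sem_assign]
      exact (lin_detAssign X _).1 μ ν h S
    · intro c μ S
      rw [sem_assign, sem_assign]
      exact (lin_detAssign X _).2 c μ S
  | passign X Rl =>
    constructor
    · intro μ ν h S'
      rw [sem_passign, sem_passign]
      exact List.sum_le_sum fun p _ =>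
        mul_le_mul_right ((lin_detAssign X (fun _ => p.2)).1 _ _ h S') _
    · intro c μ S'
      rw [sem_passign, sem_passign]
      show (Rl.1.map (fun p => (p.1 : ℝ≥0∞) *
          detAssign X (fun _ => p.2) (fun T => c * μ T) S')).sum =
        c * (Rl.1.map (fun p => (p.1 : ℝ≥0∞) * detAssign X (fun _ => p.2) μ S')).sum
      rw [← List.sum_map_mul_left]
      congr 1
      refine List.map_congr_left fun p _ => ?_
      rw [(lin_detAssign X (fun _ => p.2)).2 c μ S', mul_left_comm]
  | seq C1 C2 ih1 ih2 =>
    have h := ih1.comp ih2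
    constructor
    · intro μ ν hh S
      rw [sem_seq, sem_seq]
      exact h.1 μ ν hh S
    · intro c μ S
      rw [sem_seq, sem_seq]
      exact h.2 c μ S
  | ifte B C1 C2 ih1 ih2 =>
    have h1 := (lin_dRestrict (V := V) B).comp ih1
    have h2 := (lin_dRestrict (V := V) (BExp.not B)).comp ih2
    constructor
    · intro μ ν hh S
      rw [sem_ifte, sem_ifte]
      exact add_le_add (h1.1 μ ν hh S) (h2.1 μ ν hh S)
    · intro c μ S
      rw [sem_ifte, sem_ifte]
      show C1.sem (dRestrict B fun T => c * μ T) S +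
          C2.sem (dRestrict (BExp.not B) fun T => c * μ T) S =
        c * (C1.sem (dRestrict B μ) S + C2.sem (dRestrict (BExp.not B) μ) S)
      rw [mul_add, ← h1.2 c μ S, ← h2.2 c μ S]
  | whileDo B C ih =>
    have hit : ∀ i : ℕ,
        LinF (V := V) (fun ν => dRestrict (BExp.not B)
          ((fun ρ => C.sem (dRestrict B ρ))^[i] ν)) :=
      fun i => (((lin_dRestrict B).comp ih).iterate i).comp (lin_dRestrict (BExp.not B))
    constructor
    · intro μ ν hh S
      rw [sem_while, sem_while]
      exact ENNReal.tsum_le_tsum fun i => (hit i).1 μ ν hh S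
    · intro c μ S
      rw [sem_while, sem_while]
      show (∑' i : ℕ, dRestrict (BExp.not B)
            ((fun ν => C.sem (dRestrict B ν))^[i] fun T => c * μ T) S) =
        c * ∑' i : ℕ, dRestrict (BExp.not B)
            ((fun ν => C.sem (dRestrict B ν))^[i] μ) S
      rw [← ENNReal.tsum_mul_left]
      exact tsum_congr fun i => (hit i).2 c μ S

/-! ### Support lemmas -/

lemma tsum_exists_ne_zero {α : Type} {f : α → ℝ≥0∞} (h : ∑' a, f a ≠ 0) :
    ∃ a, f a ≠ 0 := by
  by_contra hc; push_neg at hc; exact h (by simp [ENNReal.tsum_eq_zero]; exact hc)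

lemma detAssign_point (X : V) (f : DState V → ℤ) (S : DState V) :
    detAssign X f (pointDist S) = pointDist (Function.update S X (f S)) := by
  funext S'
  have h0 : ∀ T : DState V, T ≠ S →
      pointDist S T * pointDist (Function.update T X (f T)) S' = 0 := by
    intro T hT; simp [pointDist, hT]
  show (∑' T : DState V, pointDist S T * pointDist (Function.update T X (f T)) S') = _
  rw [tsum_eq_single S h0]
  simp [pointDist]

lemma detAssign_supp {X : V} {f : DState V → ℤ} {μ : PState V} {S' : DState V}
    (h : detAssign X f μ S' ≠ 0) :
    ∃ S, μ S ≠ 0 ∧ S' = Function.update S X (f S) := by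
  obtain ⟨S, hS⟩ := tsum_exists_ne_zero h
  refine ⟨S, fun h0 => hS (by simp [h0]), ?_⟩
  by_contra hne
  exact hS (by simp [pointDist, hne])

lemma dRestrict_point {B : BExp V} {S : DState V} (hB : B.holds S) :
    dRestrict B (pointDist S) = pointDist S := by
  funext T
  by_cases hT : T = S
  · simp [dRestrict, hT, hB]
  · simp [dRestrict, pointDist, hT]

lemma dRestrict_supp {B : BExp V} {μ : PState V} {S : DState V}
    (h : dRestrict B μ S ≠ 0) : μ S ≠ 0 ∧ B.holds S := by
  by_cases hB : B.holds S
  · exact ⟨by simpa [dRestrict, hB] using h, hB⟩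
  · simp [dRestrict, hB] at h

lemma sem_supp (C : Cmd V) : ∀ (μ : PState V) (S' : DState V), C.sem μ S' ≠ 0 →
    ∃ S, μ S ≠ 0 ∧ C.sem (pointDist S) S' ≠ 0 := by
  induction C with
  | skip =>
    intro μ S' h
    rw [sem_skip] at h
    exact ⟨S', h, by simp [sem_skip, pointDist]⟩
  | assign X E =>
    intro μ S' h
    rw [sem_assign] at h
    obtain ⟨S, hS, hS'⟩ := detAssign_supp h
    exact ⟨S, hS, by simp [sem_assign, detAssign_point, pointDist, hS']⟩
  | passign X Rl =>
    intro μ S' h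
    rw [sem_passign] at h
    obtain ⟨x, hxmem, hx⟩ : ∃ x ∈ _, x ≠ (0 : ℝ≥0∞) := by
      by_contra hc2; push_neg at hc2; exact h (List.sum_eq_zero hc2)
    obtain ⟨p, hp, rfl⟩ := List.mem_map.mp hxmem
    have hp1 : (p.1 : ℝ≥0∞) ≠ 0 := fun h0 => hx (by simp [h0])
    have hd : detAssign X (fun _ => p.2) μ S' ≠ 0 := fun h0 => hx (by simp [h0])
    obtain ⟨S, hS, hS'⟩ := detAssign_supp hd
    refine ⟨S, hS, ?_⟩
    rw [sem_passign]
    refine ne_zero_of_le' (b := (p.1 : ℝ≥0∞) *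
        detAssign X (fun _ => p.2) (pointDist S) S') ?_ ?_
    · rw [detAssign_point]
      simp [pointDist, hS', hp1]
    · exact List.single_le_sum (fun x _ => zero_le) _
        (List.mem_map_of_mem hp)
  | seq C1 C2 ih1 ih2 =>
    intro μ S' h
    rw [sem_seq] at h
    obtain ⟨S1, hS1, hS1'⟩ := ih2 _ _ h
    obtain ⟨S, hS, hS''⟩ := ih1 _ _ hS1
    refine ⟨S, hS, ?_⟩
    rw [sem_seq]
    exact ne_zero_of_le' (mul_ne_zero hS'' hS1')
      ((lin_sem C2).point_le (C1.sem (pointDist S)) S1 S')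
  | ifte B C1 C2 ih1 ih2 =>
    intro μ S' h
    rw [sem_ifte] at h
    have h' : C1.sem (dRestrict B μ) S' + C2.sem (dRestrict (BExp.not B) μ) S' ≠ 0 := h
    rcases (by
      by_contra hc
      push_neg at hc
      exact h' (by rw [hc.1, hc.2, add_zero]) : C1.sem (dRestrict B μ) S' ≠ 0 ∨
        C2.sem (dRestrict (BExp.not B) μ) S' ≠ 0) with h1 | h1
    · obtain ⟨S, hS, hS'⟩ := ih1 _ _ h1
      obtain ⟨hμS, hBS⟩ := dRestrict_supp hS
      refine ⟨S, hμS, ?_⟩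
      rw [sem_ifte]
      exact ne_zero_of_le' (by rwa [dRestrict_point hBS]) le_self_add
    · obtain ⟨S, hS, hS'⟩ := ih2 _ _ h1
      obtain ⟨hμS, hBS⟩ := dRestrict_supp hS
      refine ⟨S, hμS, ?_⟩
      rw [sem_ifte]
      exact ne_zero_of_le' (by rwa [dRestrict_point hBS]) le_add_self
  | whileDo B C ih =>
    intro μ S' h
    rw [sem_while] at h
    obtain ⟨i, hi⟩ := tsum_exists_ne_zero h
    -- iterate support lemma
    have key : ∀ (i : ℕ) (μ : PState V) (S' : DState V),
        (fun ν => C.sem (dRestrict B ν))^[i] μ S' ≠ 0 →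
        ∃ S, μ S ≠ 0 ∧ (fun ν => C.sem (dRestrict B ν))^[i] (pointDist S) S' ≠ 0 := by
      intro i
      induction i with
      | zero => intro μ T h0; exact ⟨T, h0, by simp [pointDist]⟩
      | succ i ihi =>
        intro μ T h0
        rw [Function.iterate_succ_apply] at h0
        obtain ⟨S1, hS1, hS1'⟩ := ihi _ _ h0
        obtain ⟨S, hS, hS''⟩ := ih _ _ hS1
        obtain ⟨hμS, hBS⟩ := dRestrict_supp hS
        refine ⟨S, hμS, ?_⟩
        rw [Function.iterate_succ_apply]
        show (fun ν => C.sem (dRestrict B ν))^[i] (C.sem (dRestrict B (pointDist S))) T ≠ 0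
        rw [dRestrict_point hBS]
        exact ne_zero_of_le' (mul_ne_zero hS'' hS1')
          ((((lin_dRestrict B).comp (lin_sem C)).iterate i).point_le
            (C.sem (pointDist S)) S1 T)
    obtain ⟨hne, hB⟩ := dRestrict_supp hi
    obtain ⟨S, hS, hS'⟩ := key i μ S' hne
    refine ⟨S, hS, ?_⟩
    rw [sem_while]
    refine ne_zero_of_le' (b := dRestrict (BExp.not B)
        ((fun ν => C.sem (dRestrict B ν))^[i] (pointDist S)) S') ?_ (ENNReal.le_tsum i)
    simpa [dRestrict, hB] using hS'

/-! ### Assertion lemmas -/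

lemma aexp_toL_eval (I : L → ℤ) (S : DState V) (E : AExp V) :
    (E.toL : AExpL V L).eval I S = E.eval S := by
  induction E with
  | const n => rfl
  | pvar X => rfl
  | add e1 e2 ih1 ih2 => simp [AExp.toL, AExpL.eval, AExp.eval, ih1, ih2]
  | sub e1 e2 ih1 ih2 => simp [AExp.toL, AExpL.eval, AExp.eval, ih1, ih2]
  | mul e1 e2 ih1 ih2 => simp [AExp.toL, AExpL.eval, AExp.eval, ih1, ih2]

lemma aexpL_substP_eval (X : V) (E : AExp V) (e : AExpL V L) (I : L → ℤ) (S : DState V) :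
    (e.substP X E).eval I S = e.eval I (Function.update S X (E.eval S)) := by
  induction e with
  | const n => rfl
  | pvar Y =>
    by_cases h : Y = X
    · simp [AExpL.substP, h, AExpL.eval, aexp_toL_eval, Function.update]
    · simp [AExpL.substP, h, AExpL.eval, Function.update]
  | lvar x => rfl
  | add e1 e2 ih1 ih2 => simp [AExpL.substP, AExpL.eval, ih1, ih2]
  | sub e1 e2 ih1 ih2 => simp [AExpL.substP, AExpL.eval, ih1, ih2]
  | mul e1 e2 ih1 ih2 => simp [AExpL.substP, AExpL.eval, ih1, ih2]

lemma assertion_substP_sat (X : V) (E : AExp V) (φ : Assertion V L) :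
    ∀ (I : L → ℤ) (S : DState V),
      (φ.substP X E).sat I S ↔ φ.sat I (Function.update S X (E.eval S)) := by
  induction φ with
  | tt => intro I S; simp [Assertion.substP, Assertion.sat]
  | ff => intro I S; simp [Assertion.substP, Assertion.sat]
  | le e1 e2 => intro I S; simp [Assertion.substP, Assertion.sat, aexpL_substP_eval]
  | lt e1 e2 => intro I S; simp [Assertion.substP, Assertion.sat, aexpL_substP_eval]
  | eq e1 e2 => intro I S; simp [Assertion.substP, Assertion.sat, aexpL_substP_eval]
  | not φ ih => intro I S; simp [Assertion.substP, Assertion.sat, ih]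
  | and φ ψ ih1 ih2 => intro I S; simp [Assertion.substP, Assertion.sat, ih1, ih2]
  | all x φ ih => intro I S; simp [Assertion.substP, Assertion.sat, ih]
  | conj f ih => intro I S; simp [Assertion.substP, Assertion.sat, ih]

lemma bexp_toAssertion_sat (B : BExp V) (I : L → ℤ) (S : DState V) :
    (B.toAssertion : Assertion V L).sat I S ↔ B.holds S := by
  induction B with
  | tt => simp [BExp.toAssertion, Assertion.sat, BExp.holds]
  | ff => simp [BExp.toAssertion, Assertion.sat, BExp.holds]
  | le e1 e2 => simp [BExp.toAssertion, Assertion.sat, BExp.holds, aexp_toL_eval]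
  | lt e1 e2 => simp [BExp.toAssertion, Assertion.sat, BExp.holds, aexp_toL_eval]
  | eq e1 e2 => simp [BExp.toAssertion, Assertion.sat, BExp.holds, aexp_toL_eval]
  | not b ih => simp [BExp.toAssertion, Assertion.sat, BExp.holds, ih]
  | and b1 b2 ih1 ih2 => simp [BExp.toAssertion, Assertion.sat, BExp.holds, ih1, ih2]

lemma pasPre_sat {φ : Assertion V L} {X : V} {l : List (NNReal × ℤ)} {I : L → ℤ}
    {S : DState V} (h : (pasPre φ X l).sat I S) :
    ∀ p ∈ l, (φ.substP X (AExp.const p.2)).sat I S := by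
  induction l with
  | nil => intro p hp; cases hp
  | cons q l ih =>
    have h' : (Assertion.and (φ.substP X (AExp.const q.2)) (pasPre φ X l)).sat I S := h
    rw [show (Assertion.and (φ.substP X (AExp.const q.2)) (pasPre φ X l)).sat I S =
        ((φ.substP X (AExp.const q.2)).sat I S ∧ (pasPre φ X l).sat I S) from rfl] at h'
    intro p hp
    rcases List.mem_cons.mp hp with rfl | hp
    · exact h'.1
    · exact ih h'.2 p hp

lemma pointDist_ne_zero {S T : DState V} (h : pointDist S T ≠ 0) : T = S := by
  by_contra hne; exact h (by simp [pointDist, hne])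

/-- lifting of validity from point distributions to arbitrary distributions. -/
lemma valid_lift {φ ψ : Assertion V L} {C : Cmd V} (h : ValidD φ C ψ)
    (I : L → ℤ) (μ : PState V) (hμ : PSat μ I φ) : PSat (C.sem μ) I ψ := by
  intro S' hS'
  obtain ⟨S, hS, hS'2⟩ := sem_supp C μ S' hS'
  exact h I S (hμ S hS) S' hS'2

lemma psat_point {φ : Assertion V L} {I : L → ℤ} {S : DState V} (h : φ.sat I S) :
    PSat (pointDist S) I φ := by
  intro T hT
  rw [pointDist_ne_zero hT]
  exact h

lemma sat_and {φ ψ : Assertion V L} {I : L → ℤ} {S : DState V} :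
    (φ.and ψ).sat I S ↔ φ.sat I S ∧ ψ.sat I S := Iff.rfl

lemma sat_not {φ : Assertion V L} {I : L → ℤ} {S : DState V} :
    φ.not.sat I S ↔ ¬ φ.sat I S := Iff.rfl

lemma sem_zero (C : Cmd V) : C.sem (fun _ => 0) = fun _ => (0 : ℝ≥0∞) := by
  funext S'
  simpa using (lin_sem C).2 0 (fun _ => 0) S'

lemma dRestrict_point_zero {B : BExp V} {S : DState V} (hB : ¬ B.holds S) :
    dRestrict B (pointDist S) = fun _ => (0 : ℝ≥0∞) := by
  funext T
  by_cases hT : T = S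
  · simp [dRestrict, hT, hB]
  · simp [dRestrict, pointDist, hT]

theorem phl_d_soundness' {V L : Type} (φ ψ : Assertion V L) (C : Cmd V)
    (h : Derivable φ C ψ) : ValidD φ C ψ := by
  induction h with
  | skip φ =>
    intro I S hS S' hS'
    rw [sem_skip] at hS'
    rw [pointDist_ne_zero hS']
    exact hS
  | assign φ X E =>
    intro I S hS S' hS'
    rw [sem_assign, detAssign_point] at hS'
    rw [pointDist_ne_zero hS']
    exact (assertion_substP_sat X E φ I S).mp hS
  | passign φ X Rl =>
    intro I S hS S' hS'
    rw [sem_passign] at hS'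
    obtain ⟨x, hxmem, hx⟩ : ∃ x ∈ _, x ≠ (0 : ℝ≥0∞) := by
      by_contra hc2; push_neg at hc2; exact hS' (List.sum_eq_zero hc2)
    obtain ⟨p, hp, rfl⟩ := List.mem_map.mp hxmem
    have hd : detAssign X (fun _ => p.2) (pointDist S) S' ≠ 0 := fun h0 => hx (by simp [h0])
    rw [detAssign_point] at hd
    rw [pointDist_ne_zero hd]
    exact (assertion_substP_sat X (AExp.const p.2) φ I S).mp (pasPre_sat hS p hp)
  | seq h1 h2 ih1 ih2 =>
    intro I S hS
    rw [sem_seq]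
    exact valid_lift ih2 I _ (ih1 I S hS)
  | @ifte φ0 ψ0 B C1 C2 h1 h2 ih1 ih2 =>
    intro I S hS S' hS'
    rw [sem_ifte] at hS'
    have h' : C1.sem (dRestrict B (pointDist S)) S' +
        C2.sem (dRestrict (BExp.not B) (pointDist S)) S' ≠ 0 := hS'
    by_cases hB : B.holds S
    · have e2 : dRestrict (BExp.not B) (pointDist S) = fun _ => (0 : ℝ≥0∞) :=
        dRestrict_point_zero (by simp [BExp.holds, hB])
      rw [dRestrict_point hB, e2, sem_zero, add_zero] at h'
      exact ih1 I S ⟨hS, (bexp_toAssertion_sat B I S).mpr hB⟩ S' h'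
    · have e1 : dRestrict B (pointDist S) = fun _ => (0 : ℝ≥0∞) :=
        dRestrict_point_zero hB
      have e2 : dRestrict (BExp.not B) (pointDist S) = pointDist S :=
        dRestrict_point (show (BExp.not B).holds S from hB)
      rw [e1, e2, sem_zero, zero_add] at h'
      refine ih2 I S ⟨hS, ?_⟩ S' h'
      rw [sat_not, bexp_toAssertion_sat]
      exact hB
  | cons himp1 hd himp2 ih =>
    intro I S hS S' hS'
    exact himp2 I S' (ih I S (himp1 I S hS) S' hS')
  | @and φ1 φ2 ψ1 ψ2 C0 h1 h2 ih1 ih2 =>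
    intro I S hS S' hS'
    have hS12 := sat_and.mp hS
    exact sat_and.mpr ⟨ih1 I S hS12.1 S' hS', ih2 I S hS12.2 S' hS'⟩
  | @or φ1 φ2 ψ1 ψ2 C0 h1 h2 ih1 ih2 =>
    intro I S hS S' hS'
    have hS' : (φ1.sat I S) ∨ (φ2.sat I S) := by
      by_contra hc
      push_neg at hc
      exact (show ¬ ((φ1.not.and φ2.not).sat I S) from hS) ⟨hc.1, hc.2⟩
    show ¬ ((ψ1.not.and ψ2.not).sat I S')
    rcases hS' with hc | hc
    · exact fun hcon => hcon.1 (ih1 I S hc S' ‹_›)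
    · exact fun hcon => hcon.2 (ih2 I S hc S' ‹_›)
  | @whileDo φ0 B C hbody ih =>
    intro I S hS S' hS'
    rw [sem_while] at hS'
    obtain ⟨i, hi⟩ := tsum_exists_ne_zero hS'
    obtain ⟨hne, hB⟩ := dRestrict_supp hi
    have inv : ∀ i : ℕ,
        PSat ((fun ν => C.sem (dRestrict B ν))^[i] (pointDist S)) I φ0 := by
      intro i
      induction i with
      | zero => exact psat_point hS
      | succ i ihi =>
        rw [Function.iterate_succ_apply']
        intro T hT
        obtain ⟨U, hU, hU'⟩ := sem_supp C _ T hT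
        obtain ⟨hU0, hBU⟩ := dRestrict_supp hU
        exact ih I U (sat_and.mpr ⟨ihi U hU0, (bexp_toAssertion_sat B I U).mpr hBU⟩) T hU'
    refine sat_and.mpr ⟨inv i S' hne, ?_⟩
    rw [sat_not, bexp_toAssertion_sat]
    exact hB

/-- Soundness of PHL_d: every derivable Hoare triple
`{φ} C {ψ}` (with deterministic assertions and probabilistic commands) is
valid. -/
theorem phl_d_soundness {V L : Type} (φ ψ : Assertion V L) (C : Cmd V)
    (h : Derivable φ C ψ) : ValidD φ C ψ :=
  phl_d_soundness' φ ψ C h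

end Soundness
end

section
/- Semantic soundness of the WHILE rule: for deterministic assertions φ, Boolean expression B and command C, if ⊨{φ∧B}C{φ} (for every interpretation I and deterministic state S with S ⊨^I φ∧B, ⟦C⟧(μ_S) ⊨^I φ), then ⊨{φ} while B do C {φ∧¬B}, i.e., for every I and deterministic S with S ⊨^I φ, every support of ⟦while B do C⟧(μ_S) satisfies φ∧¬B under I. -/
open scoped ENNReal

section WhileSoundAux

open Classical

variable {V : Type}

/-- decomposition of a transformer on probabilistic states over point masses. -/
def LinPS (F : PState V → PState V) : Prop :=
  ∀ μ S', F μ S' = ∑' S : DState V, μ S * F (pointDist S) S'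

lemma tsum_pointDist (g : DState V → ℝ≥0∞) (S : DState V) :
    (∑' T : DState V, pointDist S T * g T) = g S := by
  rw [tsum_eq_single S]
  · simp [pointDist]
  · intro T hT; simp [pointDist, hT]

lemma tsum_pointDist' (μ : PState V) (S' : DState V) :
    (∑' S : DState V, μ S * pointDist S S') = μ S' := by
  rw [tsum_eq_single S']
  · simp [pointDist]
  · intro S hS
    have : pointDist S S' = 0 := by simp [pointDist, Ne.symm hS]
    simp [this]

lemma linPS_id : LinPS (fun μ : PState V => μ) := by
  intro μ S'; exact (tsum_pointDist' μ S').symm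

lemma linPS_restrict (B : BExp V) : LinPS (dRestrict B) := by
  intro μ S'
  by_cases hB : B.holds S'
  · have : ∀ S : DState V, dRestrict B (pointDist S) S' = pointDist S S' := by
      intro S; simp [dRestrict, hB]
    simp only [this, dRestrict, if_pos hB, tsum_pointDist']
  · have : ∀ S : DState V, dRestrict B (pointDist S) S' = 0 := by
      intro S; simp [dRestrict, hB]
    simp [this, dRestrict, if_neg hB]

lemma linPS_detAssign (X : V) (f : DState V → ℤ) : LinPS (detAssign X f) := by
  intro μ S'
  have hpt : ∀ S : DState V, detAssign X f (pointDist S) S'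
      = pointDist (Function.update S X (f S)) S' := by
    intro S
    exact tsum_pointDist (fun T => pointDist (Function.update T X (f T)) S') S
  rw [detAssign]
  exact tsum_congr fun S => by rw [hpt S]

lemma linPS_comp {F G : PState V → PState V} (hF : LinPS F) (hG : LinPS G) :
    LinPS (fun μ => G (F μ)) := by
  intro μ S'
  dsimp only
  rw [hG (F μ) S']
  have h1 : ∀ T : DState V, F μ T * G (pointDist T) S'
      = ∑' S : DState V, μ S * F (pointDist S) T * G (pointDist T) S' := by
    intro T; rw [hF μ T, ENNReal.tsum_mul_right]
  calc (∑' T : DState V, F μ T * G (pointDist T) S')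
      = ∑' T : DState V, ∑' S : DState V,
          μ S * F (pointDist S) T * G (pointDist T) S' := by
        exact tsum_congr h1
    _ = ∑' S : DState V, ∑' T : DState V,
          μ S * F (pointDist S) T * G (pointDist T) S' := ENNReal.tsum_comm
    _ = ∑' S : DState V, μ S * G (F (pointDist S)) S' := by
        refine tsum_congr fun S => ?_
        rw [hG (F (pointDist S)) S', ← ENNReal.tsum_mul_left]
        exact tsum_congr fun T => by ring

lemma linPS_add {F G : PState V → PState V} (hF : LinPS F) (hG : LinPS G) :
    LinPS (fun μ S' => F μ S' + G μ S') := by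
  intro μ S'
  dsimp only
  rw [hF μ S', hG μ S', ← ENNReal.tsum_add]
  exact tsum_congr fun S => (mul_add _ _ _).symm

lemma linPS_smul {F : PState V → PState V} (hF : LinPS F) (a : ℝ≥0∞) :
    LinPS (fun μ S' => a * F μ S') := by
  intro μ S'
  dsimp only
  rw [hF μ S', ← ENNReal.tsum_mul_left]
  exact tsum_congr fun S => by ring

lemma linPS_zero : LinPS (fun (_ : PState V) (_ : DState V) => (0 : ℝ≥0∞)) := by
  intro μ S'; simp

lemma linPS_tsum {F : ℕ → PState V → PState V} (hF : ∀ i, LinPS (F i)) :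
    LinPS (fun μ S' => ∑' i : ℕ, F i μ S') := by
  intro μ S'
  dsimp only
  calc (∑' i : ℕ, F i μ S')
      = ∑' i : ℕ, ∑' S : DState V, μ S * F i (pointDist S) S' := by
        exact tsum_congr fun i => hF i μ S'
    _ = ∑' S : DState V, ∑' i : ℕ, μ S * F i (pointDist S) S' := ENNReal.tsum_comm
    _ = ∑' S : DState V, μ S * ∑' i : ℕ, F i (pointDist S) S' := by
        exact tsum_congr fun S => ENNReal.tsum_mul_left

lemma linPS_iterate {F : PState V → PState V} (hF : LinPS F) :
    ∀ i : ℕ, LinPS (F^[i]) := by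
  intro i
  induction i with
  | zero => exact linPS_id
  | succ i ih =>
      have := linPS_comp ih hF
      intro μ S'
      simpa [Function.iterate_succ_apply'] using this μ S'

lemma linPS_listsum (X : V) (l : List (NNReal × ℤ)) :
    LinPS (fun μ S' =>
      (l.map (fun p => (p.1 : ℝ≥0∞) * detAssign X (fun _ => p.2) μ S')).sum) := by
  induction l with
  | nil => simpa using (linPS_zero (V := V))
  | cons p l ih =>
      have := linPS_add (linPS_smul (linPS_detAssign X (fun _ => p.2)) (p.1 : ℝ≥0∞)) ih
      intro μ S'
      simpa [List.map_cons, List.sum_cons] using this μ S'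

lemma linPS_sem (C : Cmd V) : LinPS (Cmd.sem C) := by
  induction C with
  | skip =>
      intro μ S'; simp only [Cmd.sem]; exact linPS_id μ S'
  | assign X E =>
      intro μ S'; simp only [Cmd.sem]; exact linPS_detAssign X (fun S => E.eval S) μ S'
  | passign X Rl =>
      intro μ S'; simp only [Cmd.sem]; exact linPS_listsum X Rl.1 μ S'
  | seq C1 C2 ih1 ih2 =>
      intro μ S'
      simp only [Cmd.sem]; exact linPS_comp ih1 ih2 μ S'
  | ifte B C1 C2 ih1 ih2 =>
      intro μ S'
      simp only [Cmd.sem]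
      exact linPS_add (linPS_comp (linPS_restrict B) ih1)
          (linPS_comp (linPS_restrict (BExp.not B)) ih2) μ S'
  | whileDo B C ih =>
      intro μ S'
      have hF : LinPS (fun ν : PState V => Cmd.sem C (dRestrict B ν)) :=
        linPS_comp (linPS_restrict B) ih
      have := linPS_tsum (fun i =>
        linPS_comp (linPS_iterate hF i) (linPS_restrict (BExp.not B))) μ S'
      simp only [Cmd.sem]
      exact this

lemma sem_support (C : Cmd V) (μ : PState V) (S' : DState V)
    (h : Cmd.sem C μ S' ≠ 0) :
    ∃ S : DState V, μ S ≠ 0 ∧ Cmd.sem C (pointDist S) S' ≠ 0 := by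
  rw [linPS_sem C μ S'] at h
  by_contra hc
  push_neg at hc
  apply h
  rw [ENNReal.tsum_eq_zero]
  intro S
  rcases eq_or_ne (μ S) 0 with h0 | h0
  · simp [h0]
  · simp [hc S h0]

lemma toL_eval {L : Type} (e : AExp V) (I : L → ℤ) (S : DState V) :
    (AExp.toL (L := L) e).eval I S = e.eval S := by
  induction e <;> simp [AExp.toL, AExp.eval, AExpL.eval, *]

lemma toAssertion_sat {L : Type} (B : BExp V) (I : L → ℤ) (S : DState V) :
    (BExp.toAssertion (L := L) B).sat I S ↔ B.holds S := by
  induction B <;> simp [BExp.toAssertion, Assertion.sat, BExp.holds, toL_eval, *]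

lemma dRestrict_ne_zero {B : BExp V} {μ : PState V} {S : DState V}
    (h : dRestrict B μ S ≠ 0) : B.holds S ∧ μ S ≠ 0 := by
  by_cases hB : B.holds S
  · exact ⟨hB, by simpa [dRestrict, hB] using h⟩
  · exact absurd (by simp [dRestrict, hB]) h

end WhileSoundAux

/-- Semantic soundness of the WHILE rule: if `⊨ {φ ∧ B} C {φ}`
then `⊨ {φ} while B do C {φ ∧ ¬B}`. -/
theorem while_rule_sound {V L : Type} (φ : Assertion V L) (B : BExp V) (C : Cmd V)
    (h : ValidD (φ.and B.toAssertion) C φ) :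
    ValidD φ (.whileDo B C) (φ.and B.toAssertion.not) := by
  intro I S hphi S' hne
  classical
  set F : PState V → PState V := fun ν => Cmd.sem C (dRestrict B ν) with hFdef
  have hne' : (∑' i : ℕ, dRestrict (BExp.not B) (F^[i] (pointDist S)) S') ≠ 0 := by
    simpa [Cmd.sem, hFdef] using hne
  obtain ⟨i, hi⟩ : ∃ i : ℕ, dRestrict (BExp.not B) (F^[i] (pointDist S)) S' ≠ 0 := by
    by_contra hc
    push_neg at hc
    exact hne' (ENNReal.tsum_eq_zero.mpr hc)
  obtain ⟨hnB, hFi⟩ := dRestrict_ne_zero hi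
  have inv : ∀ (k : ℕ) (T : DState V), F^[k] (pointDist S) T ≠ 0 → φ.sat I T := by
    intro k
    induction k with
    | zero =>
        intro T hT
        have : T = S := by
          by_contra hTS
          exact hT (by simp [pointDist, hTS])
        simpa [this] using hphi
    | succ k ih =>
        intro T hT
        rw [Function.iterate_succ_apply'] at hT
        obtain ⟨U, hU1, hU2⟩ := sem_support C _ _ hT
        obtain ⟨hBU, hnuU⟩ := dRestrict_ne_zero hU1
        have hφU : φ.sat I U := ih U hnuU
        have hpre : (φ.and B.toAssertion).sat I U :=
          ⟨hφU, (toAssertion_sat B I U).mpr hBU⟩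
        exact h I U hpre T hU2
  have hφS' : φ.sat I S' := inv i S' hFi
  refine ⟨hφS', ?_⟩
  intro hsat
  exact (by simpa [BExp.holds] using hnB : ¬ B.holds S') ((toAssertion_sat B I S').mp hsat)
end
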